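/- arXiv:1505.07258 — 4 statements merged into one kernel-verified Lean document; each statement's English description precedes it below -/
import Mathlib

section
/- Let A be a twisted R-algebra, J ⊆ A an ideal with σ_A(J) ⊆ J, and B := A/J the induced twisted quotient (with σ_B induced by σ_A). Then the induced homomorphism Φ := φ ⊗ φ : P_A → P_B (where φ : A → B is the quotient map) is surjective, Φ maps σ_{P_A}^n(I_A) onto a generating set of σ_{P_B}^n(I_B) (i.e. σ_{P_B}^n(I_B) is the ideal generated by Φ(σ_{P_A}^n(I_A))), Φ(I_A^{(n)}) generates I_B^{(n)}, and the induced ring homomorphism P_{A,(n)} → P_{B,(n)} is surjective for every n ∈ ℕ. -/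
open TensorProduct

/-- The augmentation ideal `I_A ⊆ P_A = A ⊗[R] A`: the kernel of the
multiplication map `a ⊗ b ↦ a * b`. -/
noncomputable def diagIdeal (R A : Type*) [CommRing R] [CommRing A] [Algebra R A] :
    Ideal (A ⊗[R] A) :=
  RingHom.ker (Algebra.TensorProduct.lmul' R (S := A))

/-- The endomorphism `σ = σ_A ⊗ id` of `P_A = A ⊗[R] A`. -/
noncomputable def sigmaP (R A : Type*) [CommRing R] [CommRing A] [Algebra R A]
    (σ : A →ₐ[R] A) : A ⊗[R] A →ₐ[R] A ⊗[R] A :=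
  Algebra.TensorProduct.map σ (AlgHom.id R A)

/-- The iterates `σ^n` of `σ = σ_A ⊗ id` on `P_A`. -/
noncomputable def sigmaPow (R A : Type*) [CommRing R] [CommRing A] [Algebra R A]
    (σ : A →ₐ[R] A) : ℕ → (A ⊗[R] A →ₐ[R] A ⊗[R] A)
  | 0 => AlgHom.id R _
  | n + 1 => (sigmaP R A σ).comp (sigmaPow R A σ n)

/-- The twisted powers `I_A^{(n)} = I_A · σ(I_A) ⋯ σ^{n-1}(I_A)` (with `I_A^{(0)} = P_A`). -/
noncomputable def twistedPow (R A : Type*) [CommRing R] [CommRing A] [Algebra R A]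
    (σ : A →ₐ[R] A) : ℕ → Ideal (A ⊗[R] A)
  | 0 => ⊤
  | n + 1 => twistedPow R A σ n * Ideal.map (sigmaPow R A σ n) (diagIdeal R A)

section Aux

variable {R A : Type*} [CommRing R] [CommRing A] [Algebra R A] {J : Ideal A}

/-- `Φ = φ ⊗ φ` is surjective. -/
lemma phi_surj (J : Ideal A) :
    Function.Surjective
      (Algebra.TensorProduct.map (Ideal.Quotient.mkₐ R J) (Ideal.Quotient.mkₐ R J)) := by
  rw [← AlgHom.range_eq_top, ← top_le_iff,
    ← Algebra.TensorProduct.adjoin_tmul_eq_top (R := R) (A := A ⧸ J) (B := A ⧸ J),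
    Algebra.adjoin_le_iff]
  rintro x ⟨a, b, rfl⟩
  obtain ⟨a, rfl⟩ := Ideal.Quotient.mk_surjective a
  obtain ⟨b, rfl⟩ := Ideal.Quotient.mk_surjective b
  exact ⟨a ⊗ₜ b, rfl⟩

lemma lmul'_phi (x : A ⊗[R] A) :
    Algebra.TensorProduct.lmul' R
        (Algebra.TensorProduct.map (Ideal.Quotient.mkₐ R J) (Ideal.Quotient.mkₐ R J) x) =
      Ideal.Quotient.mk J (Algebra.TensorProduct.lmul' R x) := by
  induction x with
  | zero => simp
  | tmul a b => simp [Algebra.TensorProduct.lmul'_apply_tmul]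
  | add x y hx hy => simp [map_add, hx, hy]

/-- `Φ` maps `I_A` onto a generating set of `I_B`. -/
lemma diag_map (J : Ideal A) :
    Ideal.map (Algebra.TensorProduct.map (Ideal.Quotient.mkₐ R J) (Ideal.Quotient.mkₐ R J))
      (diagIdeal R A) = diagIdeal R (A ⧸ J) := by
  apply le_antisymm
  · rw [Ideal.map_le_iff_le_comap]
    intro x hx
    have hx' : Algebra.TensorProduct.lmul' R x = 0 := hx
    simp only [Ideal.mem_comap, diagIdeal, RingHom.mem_ker, AlgHom.toRingHom_eq_coe,
      RingHom.coe_coe, lmul'_phi, hx', map_zero]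
  · intro y hy
    obtain ⟨x, rfl⟩ := phi_surj (R := R) J y
    have hy' : Algebra.TensorProduct.lmul' R
        (Algebra.TensorProduct.map (Ideal.Quotient.mkₐ R J) (Ideal.Quotient.mkₐ R J) x) = 0 := hy
    rw [lmul'_phi] at hy'
    have hJ : Algebra.TensorProduct.lmul' R x ∈ J := (Ideal.Quotient.eq_zero_iff_mem).mp hy'
    have hmem : x - (Algebra.TensorProduct.lmul' R x) ⊗ₜ[R] 1 ∈ diagIdeal R A := by
      simp [diagIdeal, RingHom.mem_ker, map_sub, Algebra.TensorProduct.lmul'_apply_tmul]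
    have := Ideal.mem_map_of_mem
      (Algebra.TensorProduct.map (Ideal.Quotient.mkₐ R J) (Ideal.Quotient.mkₐ R J)) hmem
    rw [map_sub] at this
    have h0 : Algebra.TensorProduct.map (Ideal.Quotient.mkₐ R J) (Ideal.Quotient.mkₐ R J)
        ((Algebra.TensorProduct.lmul' R x) ⊗ₜ[R] 1) = 0 := by
      simp [Algebra.TensorProduct.map_tmul, Ideal.Quotient.eq_zero_iff_mem.mpr hJ]
    rwa [h0, sub_zero] at this

variable (σA : A →ₐ[R] A) (σB : A ⧸ J →ₐ[R] A ⧸ J)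
  (hσB : σB.comp (Ideal.Quotient.mkₐ R J) = (Ideal.Quotient.mkₐ R J).comp σA)

include hσB in
lemma phi_comm_sigmaP :
    (Algebra.TensorProduct.map (Ideal.Quotient.mkₐ R J) (Ideal.Quotient.mkₐ R J)).comp
        (sigmaP R A σA) =
      (sigmaP R (A ⧸ J) σB).comp
        (Algebra.TensorProduct.map (Ideal.Quotient.mkₐ R J) (Ideal.Quotient.mkₐ R J)) := by
  unfold sigmaP
  rw [← Algebra.TensorProduct.map_comp, ← Algebra.TensorProduct.map_comp, hσB,
    AlgHom.comp_id, AlgHom.id_comp]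

include hσB in
lemma phi_comm_sigmaPow (n : ℕ) :
    (Algebra.TensorProduct.map (Ideal.Quotient.mkₐ R J) (Ideal.Quotient.mkₐ R J)).comp
        (sigmaPow R A σA n) =
      (sigmaPow R (A ⧸ J) σB n).comp
        (Algebra.TensorProduct.map (Ideal.Quotient.mkₐ R J) (Ideal.Quotient.mkₐ R J)) := by
  induction n with
  | zero => simp [sigmaPow]
  | succ n ih =>
    show _ = (sigmaPow R (A ⧸ J) σB (n+1)).comp _
    unfold sigmaPow
    rw [← AlgHom.comp_assoc, phi_comm_sigmaP σA σB hσB, AlgHom.comp_assoc, ih,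
      AlgHom.comp_assoc]

include hσB in
lemma sigmaPow_diag_map (n : ℕ) :
    Ideal.map (sigmaPow R (A ⧸ J) σB n) (diagIdeal R (A ⧸ J)) =
      Ideal.map (Algebra.TensorProduct.map (Ideal.Quotient.mkₐ R J) (Ideal.Quotient.mkₐ R J))
        (Ideal.map (sigmaPow R A σA n) (diagIdeal R A)) := by
  rw [Ideal.map_mapₐ, phi_comm_sigmaPow σA σB hσB n, ← Ideal.map_mapₐ, diag_map]

end Aux

/-- For a twisted quotient `B = A/J` (where `σ_A(J) ⊆ J` and `σ_B` is induced by `σ_A`),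
the induced homomorphism `Φ = φ ⊗ φ : P_A → P_B` is surjective, it maps
`σ^n(I_A)` onto a generating set of `σ^n(I_B)`, `Φ(I_A^{(n)})` generates `I_B^{(n)}`,
and the induced ring homomorphism `P_{A,(n)} → P_{B,(n)}` is surjective for every `n`. -/
theorem stmt2 (R A : Type*) [CommRing R] [CommRing A] [Algebra R A]
    (σA : A →ₐ[R] A) (J : Ideal A) (hJ : ∀ a ∈ J, σA a ∈ J)
    (σB : A ⧸ J →ₐ[R] A ⧸ J)
    (hσB : σB.comp (Ideal.Quotient.mkₐ R J) = (Ideal.Quotient.mkₐ R J).comp σA) :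
    Function.Surjective
        (Algebra.TensorProduct.map (Ideal.Quotient.mkₐ R J) (Ideal.Quotient.mkₐ R J)) ∧
      (∀ n : ℕ,
        Ideal.map (sigmaPow R (A ⧸ J) σB n) (diagIdeal R (A ⧸ J)) =
          Ideal.map (Algebra.TensorProduct.map (Ideal.Quotient.mkₐ R J) (Ideal.Quotient.mkₐ R J))
            (Ideal.map (sigmaPow R A σA n) (diagIdeal R A))) ∧
      (∀ n : ℕ,
        twistedPow R (A ⧸ J) σB n =
          Ideal.map (Algebra.TensorProduct.map (Ideal.Quotient.mkₐ R J) (Ideal.Quotient.mkₐ R J))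
            (twistedPow R A σA n)) ∧
      (∀ n : ℕ,
        ∀ ψ : (A ⊗[R] A) ⧸ twistedPow R A σA (n + 1) →+*
            ((A ⧸ J) ⊗[R] (A ⧸ J)) ⧸ twistedPow R (A ⧸ J) σB (n + 1),
          ψ.comp (Ideal.Quotient.mk (twistedPow R A σA (n + 1))) =
            (Ideal.Quotient.mk (twistedPow R (A ⧸ J) σB (n + 1))).comp
              (Algebra.TensorProduct.map (Ideal.Quotient.mkₐ R J)
                (Ideal.Quotient.mkₐ R J)).toRingHom →
          Function.Surjective ψ) := by
  have hsurj := phi_surj (R := R) J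
  have htw : ∀ n : ℕ,
      twistedPow R (A ⧸ J) σB n =
        Ideal.map (Algebra.TensorProduct.map (Ideal.Quotient.mkₐ R J) (Ideal.Quotient.mkₐ R J))
          (twistedPow R A σA n) := by
    intro n
    induction n with
    | zero =>
      show (⊤ : Ideal _) = Ideal.map _ (⊤ : Ideal _)
      rw [Ideal.map_top]
    | succ n ih =>
      show twistedPow R (A ⧸ J) σB n * _ = Ideal.map _ (twistedPow R A σA n * _)
      rw [Ideal.map_mul, ih, sigmaPow_diag_map σA σB hσB n]
  refine ⟨hsurj, fun n => sigmaPow_diag_map σA σB hσB n, htw, ?_⟩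
  intro n ψ hψ
  have h2 : Function.Surjective ((Ideal.Quotient.mk (twistedPow R (A ⧸ J) σB (n + 1))).comp
      (Algebra.TensorProduct.map (Ideal.Quotient.mkₐ R J) (Ideal.Quotient.mkₐ R J)).toRingHom) :=
    (Ideal.Quotient.mk_surjective).comp hsurj
  rw [← hψ] at h2
  exact Function.Surjective.of_comp h2
end

section
/- Let A be a twisted R-algebra, S ⊆ A a multiplicative submonoid, and B := S^{-1}A the localization; assume that every element of σ_A(S) becomes a unit in B, so that σ_A induces an endomorphism σ_B of B with σ_B ∘ φ = φ ∘ σ_A, where φ : A → B is the localization map (B is then a twisted localization of A). Then P_B = B ⊗_R B is the localization of P_A = A ⊗_R A at the multiplicative submonoid S' of P_A generated by the elements s ⊗ 1 and 1 ⊗ s for s ∈ S. -/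
open TensorProduct

/-- Descend a localization along a smaller submonoid with the same saturation. -/
theorem aux_isLocalization_of_le_of_exists_mul_mem {R : Type*} (Q : Type*) [CommRing R]
    [CommRing Q] [Algebra R Q] (M N : Submonoid R) [IsLocalization N Q] (h₁ : M ≤ N)
    (h₂ : ∀ n ∈ N, ∃ m, m * n ∈ M) : IsLocalization M Q where
  map_units y := IsLocalization.map_units Q (⟨y.1, h₁ y.2⟩ : N)
  surj z := by
    obtain ⟨⟨x, n⟩, e⟩ := IsLocalization.surj N z
    obtain ⟨m, hm⟩ := h₂ n n.2
    refine ⟨⟨m * x, ⟨m * n, hm⟩⟩, ?_⟩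
    dsimp only at e ⊢
    rw [map_mul, map_mul, ← mul_assoc, mul_comm z, mul_assoc, e]
  exists_of_eq {x y} h := by
    obtain ⟨c, hc⟩ := IsLocalization.exists_of_eq (M := N) (S := Q) h
    obtain ⟨m, hm⟩ := h₂ c c.2
    exact ⟨⟨m * ↑c, hm⟩, by simpa only [mul_assoc] using congrArg (m * ·) hc⟩

/-- Localizing the left tensor factor. -/
theorem aux_isLocalization_tensor_left (R A B C : Type*) [CommRing R] [CommRing A] [Algebra R A]
    [CommRing B] [Algebra R B] [Algebra A B] [IsScalarTower R A B]
    [CommRing C] [Algebra R C]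
    (S : Submonoid A) [IsLocalization S B]
    [alg : Algebra (A ⊗[R] C) (B ⊗[R] C)]
    (halg : algebraMap (A ⊗[R] C) (B ⊗[R] C) =
      (Algebra.TensorProduct.map (IsScalarTower.toAlgHom R A B) (AlgHom.id R C)).toRingHom) :
    IsLocalization (Submonoid.map (Algebra.TensorProduct.includeLeft : A →ₐ[R] A ⊗[R] C) S)
      (B ⊗[R] C) := by
  letI : Algebra C (A ⊗[R] C) := Algebra.TensorProduct.rightAlgebra
  letI : Algebra C (B ⊗[R] C) := Algebra.TensorProduct.rightAlgebra
  haveI : IsScalarTower A (A ⊗[R] C) (B ⊗[R] C) :=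
    IsScalarTower.of_algebraMap_eq fun a => by simp [halg]
  haveI : IsScalarTower R (A ⊗[R] C) (B ⊗[R] C) :=
    IsScalarTower.of_algebraMap_eq fun r => by simp [halg]
  haveI : IsScalarTower C (A ⊗[R] C) (B ⊗[R] C) :=
    IsScalarTower.of_algebraMap_eq fun c => by
      simp [halg, RingHom.algebraMap_toAlgebra]
  haveI : Algebra.IsPushout A B (A ⊗[R] C) (B ⊗[R] C) := by
    rw [← Algebra.IsPushout.comp_iff (R := R) (S := A) (R' := C)]
    infer_instance
  have key : IsLocalization (Algebra.algebraMapSubmonoid (A ⊗[R] C) S) (B ⊗[R] C) := by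
    rw [← isLocalizedModule_iff_isLocalization,
      isLocalizedModule_iff_isBaseChange (S := S) (A := B)]
    exact Algebra.IsPushout.out
  exact key

/-- Localizing the right tensor factor. -/
theorem aux_isLocalization_tensor_right (R A B C : Type*) [CommRing R] [CommRing A] [Algebra R A]
    [CommRing B] [Algebra R B] [Algebra A B] [IsScalarTower R A B]
    [CommRing C] [Algebra R C]
    (S : Submonoid A) [IsLocalization S B]
    [alg : Algebra (C ⊗[R] A) (C ⊗[R] B)]
    (halg : algebraMap (C ⊗[R] A) (C ⊗[R] B) =
      (Algebra.TensorProduct.map (AlgHom.id R C) (IsScalarTower.toAlgHom R A B)).toRingHom) :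
    IsLocalization (Submonoid.map (Algebra.TensorProduct.includeRight : A →ₐ[R] C ⊗[R] A) S)
      (C ⊗[R] B) := by
  letI : Algebra A (C ⊗[R] A) := Algebra.TensorProduct.rightAlgebra
  letI : Algebra B (C ⊗[R] B) := Algebra.TensorProduct.rightAlgebra
  letI : Algebra A (C ⊗[R] B) :=
    ((algebraMap (C ⊗[R] A) (C ⊗[R] B)).comp (algebraMap A (C ⊗[R] A))).toAlgebra
  haveI : IsScalarTower A (C ⊗[R] A) (C ⊗[R] B) := IsScalarTower.of_algebraMap_eq' rfl
  haveI : IsScalarTower A B (C ⊗[R] B) :=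
    IsScalarTower.of_algebraMap_eq fun a => by
      simp [RingHom.algebraMap_toAlgebra, halg]
  haveI : IsScalarTower R (C ⊗[R] A) (C ⊗[R] B) :=
    IsScalarTower.of_algebraMap_eq fun r => by simp [halg]
  haveI : IsScalarTower C (C ⊗[R] A) (C ⊗[R] B) :=
    IsScalarTower.of_algebraMap_eq fun c => by simp [halg]
  haveI : Algebra.IsPushout A B (C ⊗[R] A) (C ⊗[R] B) := by
    rw [← Algebra.IsPushout.comp_iff (R := R) (S := A) (R' := C)]
    infer_instance
  have key : IsLocalization (Algebra.algebraMapSubmonoid (C ⊗[R] A) S) (C ⊗[R] B) := by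
    rw [← isLocalizedModule_iff_isLocalization,
      isLocalizedModule_iff_isBaseChange (S := S) (A := B)]
    exact Algebra.IsPushout.out
  exact key

/-- For a twisted localization `B = S⁻¹A` of a twisted `R`-algebra `A`,
`P_B = B ⊗_R B` is the localization of `P_A = A ⊗_R A` at the multiplicative
submonoid `S'` generated by the elements `s ⊗ 1` and `1 ⊗ s` for `s ∈ S`. -/
theorem stmt4 (R A B : Type*) [CommRing R] [CommRing A] [Algebra R A]
    [CommRing B] [Algebra R B] [Algebra A B] [IsScalarTower R A B]
    (S : Submonoid A) [IsLocalization S B]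
    (σA : A →ₐ[R] A) (hS : ∀ s ∈ S, IsUnit (algebraMap A B (σA s)))
    (σB : B →ₐ[R] B)
    (hσB : σB.comp (IsScalarTower.toAlgHom R A B) = (IsScalarTower.toAlgHom R A B).comp σA)
    [alg : Algebra (A ⊗[R] A) (B ⊗[R] B)]
    (halg : algebraMap (A ⊗[R] A) (B ⊗[R] B) =
      (Algebra.TensorProduct.map (IsScalarTower.toAlgHom R A B)
        (IsScalarTower.toAlgHom R A B)).toRingHom) :
    IsLocalization
      (Submonoid.map (Algebra.TensorProduct.includeLeft : A →ₐ[R] A ⊗[R] A) S ⊔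
        Submonoid.map (Algebra.TensorProduct.includeRight : A →ₐ[R] A ⊗[R] A) S)
      (B ⊗[R] B) := by
  classical
  set φ := IsScalarTower.toAlgHom R A B with hφ
  letI algPT : Algebra (A ⊗[R] A) (B ⊗[R] A) :=
    (Algebra.TensorProduct.map φ (AlgHom.id R A)).toRingHom.toAlgebra
  letI algTQ : Algebra (B ⊗[R] A) (B ⊗[R] B) :=
    (Algebra.TensorProduct.map (AlgHom.id R B) φ).toRingHom.toAlgebra
  haveI : IsScalarTower (A ⊗[R] A) (B ⊗[R] A) (B ⊗[R] B) := by
    refine IsScalarTower.of_algebraMap_eq fun x => ?_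
    rw [halg]
    show _ = ((Algebra.TensorProduct.map (AlgHom.id R B) φ).comp
      (Algebra.TensorProduct.map φ (AlgHom.id R A))) x
    rw [← Algebra.TensorProduct.map_comp]
    simp
  set M₁ : Submonoid (A ⊗[R] A) :=
    Submonoid.map (Algebra.TensorProduct.includeLeft : A →ₐ[R] A ⊗[R] A) S with hM₁
  set M₂ : Submonoid (A ⊗[R] A) :=
    Submonoid.map (Algebra.TensorProduct.includeRight : A →ₐ[R] A ⊗[R] A) S with hM₂
  haveI locPT : IsLocalization M₁ (B ⊗[R] A) :=
    aux_isLocalization_tensor_left R A B A S (halg := rfl)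
  set N₁ : Submonoid (B ⊗[R] A) :=
    Submonoid.map (Algebra.TensorProduct.includeRight : A →ₐ[R] B ⊗[R] A) S with hN₁
  haveI locTQ : IsLocalization N₁ (B ⊗[R] B) :=
    aux_isLocalization_tensor_right R A B B S (halg := rfl)
  haveI locBig : IsLocalization
      (IsLocalization.localizationLocalizationSubmodule M₁ N₁) (B ⊗[R] B) :=
    IsLocalization.localization_localization_isLocalization M₁ N₁ (B ⊗[R] B)
  have himg : ∀ s : A, algebraMap (A ⊗[R] A) (B ⊗[R] A) ((1 : A) ⊗ₜ[R] s) = (1 : B) ⊗ₜ[R] s := by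
    intro s
    show Algebra.TensorProduct.map φ (AlgHom.id R A) ((1 : A) ⊗ₜ[R] s) = _
    simp
  apply aux_isLocalization_of_le_of_exists_mul_mem (B ⊗[R] B)
    (M₁ ⊔ M₂) (IsLocalization.localizationLocalizationSubmodule M₁ N₁)
  · rw [sup_le_iff]
    constructor
    · intro x hx
      rw [IsLocalization.mem_localizationLocalizationSubmodule]
      exact ⟨1, ⟨x, hx⟩, by simp⟩
    · intro x hx
      rw [IsLocalization.mem_localizationLocalizationSubmodule]
      obtain ⟨s, hs, rfl⟩ := hx
      refine ⟨⟨(1 : B) ⊗ₜ[R] s, ⟨s, hs, by simp⟩⟩, 1, ?_⟩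
      simpa using himg s
  · intro n hn
    rw [IsLocalization.mem_localizationLocalizationSubmodule] at hn
    obtain ⟨y, z, e⟩ := hn
    obtain ⟨s, hs, hy⟩ := y.2
    have e' : algebraMap (A ⊗[R] A) (B ⊗[R] A) n =
        algebraMap (A ⊗[R] A) (B ⊗[R] A) (((1 : A) ⊗ₜ[R] s) * ↑z) := by
      rw [map_mul, himg s]
      have : (1 : B) ⊗ₜ[R] s = (y : B ⊗[R] A) := by simpa using hy
      rw [this]
      exact e
    obtain ⟨c, hc⟩ := (IsLocalization.eq_iff_exists M₁ (B ⊗[R] A)).mp e'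
    refine ⟨(c : A ⊗[R] A), ?_⟩
    rw [hc]
    have h1 : ((1 : A) ⊗ₜ[R] s) ∈ M₁ ⊔ M₂ :=
      Submonoid.mem_sup_right ⟨s, hs, by simp⟩
    have h2 : (c : A ⊗[R] A) * (z : A ⊗[R] A) ∈ M₁ ⊔ M₂ :=
      mul_mem (Submonoid.mem_sup_left c.2) (Submonoid.mem_sup_left z.2)
    have hre : (c : A ⊗[R] A) * (((1 : A) ⊗ₜ[R] s) * ↑z) =
        ((c : A ⊗[R] A) * (z : A ⊗[R] A)) * ((1 : A) ⊗ₜ[R] s) := by ring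
    rw [hre]
    exact mul_mem h2 h1
end

section
/- Let A be a twisted R-algebra and B := S^{-1}A a twisted localization of A, with localization map φ : A → B and induced map Φ := φ ⊗ φ : P_A → P_B. Then I_B is the extension of I_A along Φ (i.e. I_B = I_A · P_B, equivalently I_B = P_B ⊗_{P_A} I_A), and for every n ∈ ℕ one has σ_{P_B}^n(I_B) · P_B = σ_{P_A}^n(I_A) · P_B and I_B^{(n)} = I_A^{(n)} · P_B, i.e. the twisted powers of I_B are the extensions of the twisted powers of I_A. -/
open TensorProduct

lemma aux_map_map {A B C : Type*} [CommRing A] [CommRing B] [CommRing C]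
    {F G : Type*} [FunLike F A B] [RingHomClass F A B] [FunLike G B C] [RingHomClass G B C]
    (f : F) (g : G) (I : Ideal A) :
    (I.map f).map g = I.map ((g : B →+* C).comp (f : A →+* B)) :=
  Ideal.map_map (f : A →+* B) (g : B →+* C)


/-- For a twisted localization `B = S⁻¹A` of `A` with localization map `φ` and
`Φ = φ ⊗ φ : P_A → P_B`: `I_B` is the extension of `I_A` along `Φ`, and for every `n`,
`σ^n(I_B)·P_B = σ^n(I_A)·P_B` and `I_B^{(n)} = I_A^{(n)}·P_B`, i.e. the twisted powers
of `I_B` are the extensions of the twisted powers of `I_A`. -/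
theorem stmt5 (R A B : Type*) [CommRing R] [CommRing A] [Algebra R A]
    [CommRing B] [Algebra R B] [Algebra A B] [IsScalarTower R A B]
    (S : Submonoid A) [IsLocalization S B]
    (σA : A →ₐ[R] A) (hS : ∀ s ∈ S, IsUnit (algebraMap A B (σA s)))
    (σB : B →ₐ[R] B)
    (hσB : σB.comp (IsScalarTower.toAlgHom R A B) =
      (IsScalarTower.toAlgHom R A B).comp σA) :
    diagIdeal R B =
        Ideal.map
          (Algebra.TensorProduct.map (IsScalarTower.toAlgHom R A B)
            (IsScalarTower.toAlgHom R A B))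
          (diagIdeal R A) ∧
      (∀ n : ℕ,
        Ideal.map (sigmaPow R B σB n) (diagIdeal R B) =
          Ideal.map
            (Algebra.TensorProduct.map (IsScalarTower.toAlgHom R A B)
              (IsScalarTower.toAlgHom R A B))
            (Ideal.map (sigmaPow R A σA n) (diagIdeal R A))) ∧
      (∀ n : ℕ,
        twistedPow R B σB n =
          Ideal.map
            (Algebra.TensorProduct.map (IsScalarTower.toAlgHom R A B)
              (IsScalarTower.toAlgHom R A B))
            (twistedPow R A σA n)) := by
  set φ := IsScalarTower.toAlgHom R A B with hφdef
  set Φ := Algebra.TensorProduct.map φ φ with hΦdef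
  have hφ : ∀ a : A, φ a = algebraMap A B a := fun a => rfl
  have hlmul : ∀ x : A ⊗[R] A,
      Algebra.TensorProduct.lmul' R (S := B) (Φ x) =
        φ (Algebra.TensorProduct.lmul' R (S := A) x) := by
    intro x
    induction x using TensorProduct.induction_on with
    | zero => simp
    | tmul a b => simp [hΦdef]
    | add x y hx hy => simp [hx, hy]
  have h1 : diagIdeal R B = Ideal.map Φ (diagIdeal R A) := by
    apply le_antisymm
    · rw [show diagIdeal R B = KaehlerDifferential.ideal R B from rfl,
        ← KaehlerDifferential.span_range_eq_ideal, Ideal.span_le]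
      rintro _ ⟨b, rfl⟩
      show (1 : B) ⊗ₜ[R] b - b ⊗ₜ[R] (1 : B) ∈ (Ideal.map Φ (diagIdeal R A) : Set (B ⊗[R] B))
      rw [SetLike.mem_coe]
      obtain ⟨⟨a, s⟩, hbs⟩ := IsLocalization.surj S b
      have hs := IsLocalization.map_units B s
      have hu : IsUnit ((1 : B) ⊗ₜ[R] (algebraMap A B s) * (algebraMap A B s) ⊗ₜ[R] (1 : B)) :=
        (hs.map (Algebra.TensorProduct.includeRight (R := R) (A := B))).mul
          (hs.map (Algebra.TensorProduct.includeLeft (R := R) (S := B)))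
      rw [← Ideal.unit_mul_mem_iff_mem _ hu]
      have key : ((1 : B) ⊗ₜ[R] (algebraMap A B s) * (algebraMap A B s) ⊗ₜ[R] (1 : B)) *
          ((1 : B) ⊗ₜ[R] b - b ⊗ₜ[R] (1 : B)) =
          Φ ((s : A) ⊗ₜ[R] a - a ⊗ₜ[R] (s : A)) := by
        simp only [hΦdef, map_sub, Algebra.TensorProduct.map_tmul,
          Algebra.TensorProduct.tmul_mul_tmul, mul_sub, one_mul, mul_one, hφ]
        rw [mul_comm (algebraMap A B s) b, hbs]
      rw [key]
      apply Ideal.mem_map_of_mem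
      show _ ∈ RingHom.ker _
      rw [RingHom.mem_ker]
      simp [mul_comm]
    · rw [Ideal.map_le_iff_le_comap]
      intro x hx
      have hx0 : Algebra.TensorProduct.lmul' R (S := A) x = 0 := hx
      show Φ x ∈ RingHom.ker _
      rw [RingHom.mem_ker, hlmul, hx0, map_zero]
  have hσφ : ∀ a : A, σB (φ a) = φ (σA a) := fun a => AlgHom.congr_fun hσB a
  have hstep : (sigmaP R B σB).comp Φ = Φ.comp (sigmaP R A σA) := by
    ext a
    · simp [sigmaP, hΦdef, hσφ]
    · simp [sigmaP, hΦdef]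
  have hcomm : ∀ n, (sigmaPow R B σB n).comp Φ = Φ.comp (sigmaPow R A σA n) := by
    intro n
    induction n with
    | zero =>
      show (AlgHom.id R _).comp Φ = Φ.comp (AlgHom.id R _)
      rw [AlgHom.id_comp, AlgHom.comp_id]
    | succ n ih =>
      show ((sigmaP R B σB).comp (sigmaPow R B σB n)).comp Φ = _
      rw [AlgHom.comp_assoc, ih, ← AlgHom.comp_assoc, hstep, AlgHom.comp_assoc]
      rfl
  have h2 : ∀ n, Ideal.map (sigmaPow R B σB n) (diagIdeal R B) =
      Ideal.map Φ (Ideal.map (sigmaPow R A σA n) (diagIdeal R A)) := by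
    intro n
    rw [h1, aux_map_map, aux_map_map]
    congr 1
    have := congrArg AlgHom.toRingHom (hcomm n)
    exact this
  refine ⟨h1, h2, ?_⟩
  intro n
  induction n with
  | zero =>
    show (⊤ : Ideal (B ⊗[R] B)) = Ideal.map Φ ⊤
    rw [Ideal.map_top]
  | succ n ih =>
    show twistedPow R B σB n * Ideal.map (sigmaPow R B σB n) (diagIdeal R B) = _
    rw [ih, h2 n, show twistedPow R A σA (n + 1) =
      twistedPow R A σA n * Ideal.map (sigmaPow R A σA n) (diagIdeal R A) from rfl,
      Ideal.map_mul]
end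

section
/- Let A be a twisted R-algebra. For every x ∈ A and every n ∈ ℕ, there exists f ∈ P_A such that f · (1 ⊗ x) ≡ (∏_{i=0}^{n} σ_A^i(x)) ⊗ 1 modulo the twisted power ideal I_A^{(n+1)}; that is, in the ring of twisted principal parts P_{A,(n)} = P_A/I_A^{(n+1)}, the class of 1 ⊗ x divides the class of (σ_A^0(x) σ_A^1(x) ⋯ σ_A^n(x)) ⊗ 1. -/
open TensorProduct

section
variable (R A : Type*) [CommRing R] [CommRing A] [Algebra R A] (σ : A →ₐ[R] A)

lemma sigmaPow_tmul (k : ℕ) (a b : A) :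
    sigmaPow R A σ k (a ⊗ₜ[R] b) = (⇑σ)^[k] a ⊗ₜ[R] b := by
  induction k with
  | zero => rfl
  | succ k ih =>
    simp [sigmaPow, ih, sigmaP, Function.iterate_succ_apply']

lemma mem_diag (x : A) : x ⊗ₜ[R] (1:A) - (1:A) ⊗ₜ[R] x ∈ diagIdeal R A := by
  simp [diagIdeal, RingHom.mem_ker]

lemma aux (x : A) : ∀ n : ℕ, ∃ f : A ⊗[R] A,
    (∏ i ∈ Finset.range (n + 1), (⇑σ)^[i] x) ⊗ₜ[R] (1:A) - f * ((1:A) ⊗ₜ[R] x)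
      ∈ twistedPow R A σ (n + 1) := by
  intro n
  induction n with
  | zero =>
    refine ⟨1, ?_⟩
    have h : twistedPow R A σ (0+1) = Ideal.map (sigmaPow R A σ 0) (diagIdeal R A) := by
      rw [twistedPow, twistedPow, Ideal.top_mul]
    rw [h]
    simpa [sigmaPow_tmul] using Ideal.mem_map_of_mem (sigmaPow R A σ 0) (mem_diag R A x)
  | succ n ih =>
    obtain ⟨f, hf⟩ := ih
    set e : A ⊗[R] A := (⇑σ)^[n+1] x ⊗ₜ[R] (1:A) - (1:A) ⊗ₜ[R] x with he
    have heI : e ∈ Ideal.map (sigmaPow R A σ (n+1)) (diagIdeal R A) := by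
      have : e = sigmaPow R A σ (n+1) (x ⊗ₜ[R] (1:A) - (1:A) ⊗ₜ[R] x) := by
        rw [map_sub, sigmaPow_tmul, sigmaPow_tmul]
        simp only [iterate_map_one]
        exact he
      rw [this]
      exact Ideal.mem_map_of_mem _ (mem_diag R A x)
    set p : A := ∏ i ∈ Finset.range (n + 1), (⇑σ)^[i] x with hp
    refine ⟨p ⊗ₜ[R] (1:A) + f * e, ?_⟩
    have key : (∏ i ∈ Finset.range (n + 2), (⇑σ)^[i] x) ⊗ₜ[R] (1:A)
        - (p ⊗ₜ[R] (1:A) + f * e) * ((1:A) ⊗ₜ[R] x)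
        = (p ⊗ₜ[R] (1:A) - f * ((1:A) ⊗ₜ[R] x)) * e := by
      have h1 : (∏ i ∈ Finset.range (n + 2), (⇑σ)^[i] x) ⊗ₜ[R] (1:A)
          = (p ⊗ₜ[R] (1:A)) * ((⇑σ)^[n+1] x ⊗ₜ[R] (1:A)) := by
        rw [Finset.prod_range_succ, Algebra.TensorProduct.tmul_mul_tmul, one_mul]
      have h2 : (⇑σ)^[n+1] x ⊗ₜ[R] (1:A) = (1:A) ⊗ₜ[R] x + e := by rw [he]; ring
      rw [h1, h2]; ring
    rw [key]
    show _ ∈ twistedPow R A σ (n+1) * Ideal.map (sigmaPow R A σ (n+1)) (diagIdeal R A)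
    exact Ideal.mul_mem_mul hf heI

end

/-- For every `x ∈ A` and `n ∈ ℕ` there exists `f ∈ P_A` with
`f · (1 ⊗ x) ≡ (∏_{i=0}^{n} σ_A^i(x)) ⊗ 1  mod I_A^{(n+1)}`; that is, in
`P_{A,(n)} = P_A/I_A^{(n+1)}` the class of `1 ⊗ x` divides the class of
`(σ_A^0(x) ⋯ σ_A^n(x)) ⊗ 1`. -/
theorem stmt8 (R A : Type*) [CommRing R] [CommRing A] [Algebra R A]
    (σA : A →ₐ[R] A) (x : A) (n : ℕ) :
    (∃ f : A ⊗[R] A,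
        f * ((1 : A) ⊗ₜ[R] x) -
            (∏ i ∈ Finset.range (n + 1), (⇑σA)^[i] x) ⊗ₜ[R] (1 : A) ∈
          twistedPow R A σA (n + 1)) ∧
      Ideal.Quotient.mk (twistedPow R A σA (n + 1)) ((1 : A) ⊗ₜ[R] x) ∣
        Ideal.Quotient.mk (twistedPow R A σA (n + 1))
          ((∏ i ∈ Finset.range (n + 1), (⇑σA)^[i] x) ⊗ₜ[R] (1 : A)) := by
  obtain ⟨f, hf⟩ := aux R A σA x n
  constructor
  · exact ⟨f, by have := neg_mem hf; rwa [neg_sub] at this⟩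
  · refine ⟨Ideal.Quotient.mk _ f, ?_⟩
    rw [← map_mul]
    exact Ideal.Quotient.eq.mpr (by rw [mul_comm]; exact hf)
end
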